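/- Let n ≥ 1 and ε > 0, and let g : [0, ε) → Sym(n, ℝ) be a C⁴ family of symmetric n×n real matrices with g(Ω) invertible for every Ω ∈ [0, ε), satisfying the matrix ODE g̈(Ω) = (1/2) ġ(Ω) g(Ω)⁻¹ ġ(Ω) + Ω⁻¹ ġ(Ω) for all Ω ∈ (0, ε), where dots denote d/dΩ. Set γ := g(0). Then ġ(0) = 0, g⁽³⁾(0) = 0, and g(Ω) = γ + (Ω²/2) g̈(0) + (Ω⁴/16) g̈(0) γ⁻¹ g̈(0) for every Ω ∈ [0, ε). -/

import Mathlib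

open scoped BigOperators Matrix
open Set

attribute [local instance] Matrix.normedAddCommGroup Matrix.normedSpace

section St4Aux

variable {N : ℕ} {s : Set ℝ} {x : ℝ}

local notation "Mat" => Matrix (Fin N) (Fin N) ℝ

theorem st4_slope_entry (f : ℝ → Mat) (i j : Fin N) (y : ℝ) :
    slope f x y i j = slope (fun t => f t i j) x y := by
  simp [slope, Matrix.sub_apply, Matrix.smul_apply, smul_eq_mul]

theorem st4_hasDeriv_iff {f : ℝ → Mat} {f' : Mat} :
    HasDerivWithinAt f f' s x ↔
      ∀ i j, HasDerivWithinAt (fun t => f t i j) (f' i j) s x := by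
  simp only [hasDerivWithinAt_iff_tendsto_slope]
  constructor
  · intro h i j
    have h2 : Filter.Tendsto (fun y => slope f x y i j) (nhdsWithin x (s \ {x}))
        (nhds (f' i j)) :=
      (((continuous_apply j).comp (continuous_apply (A := fun _ : Fin N => Fin N → ℝ) i)).continuousAt (x := f')).tendsto.comp (hasDerivWithinAt_iff_tendsto_slope.1 h)
    exact (Filter.tendsto_congr (fun y => st4_slope_entry f i j y)).1 h2
  · intro h
    apply hasDerivWithinAt_iff_tendsto_slope.2
    apply tendsto_pi_nhds.2
    intro i
    apply tendsto_pi_nhds.2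
    intro j
    exact (Filter.tendsto_congr (fun y => st4_slope_entry f i j y)).2 (h i j)

theorem st4_mul {f h : ℝ → Mat} {f' h' : Mat}
    (hf : HasDerivWithinAt f f' s x) (hh : HasDerivWithinAt h h' s x) :
    HasDerivWithinAt (fun t => f t * h t) (f' * h x + f x * h') s x := by
  rw [st4_hasDeriv_iff]
  intro i j
  have : ∀ t, (f t * h t) i j = ∑ k, f t i k * h t k j := fun t => Matrix.mul_apply
  have hmain : HasDerivWithinAt (fun t => ∑ k, f t i k * h t k j)
      (∑ k, (f' i k * h x k j + f x i k * h' k j)) s x := by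
    apply HasDerivWithinAt.fun_sum
    intro k _
    exact (st4_hasDeriv_iff.1 hf i k).mul (st4_hasDeriv_iff.1 hh k j)
  have heq : (∑ k, (f' i k * h x k j + f x i k * h' k j))
      = (f' * h x + f x * h') i j := by
    simp [Matrix.add_apply, Matrix.mul_apply, Finset.sum_add_distrib]
  rw [← heq]
  exact hmain.congr (fun t _ => (this t).symm) (this x).symm

theorem st4_det_aux {f : ℝ → Mat}
    (hent : ∀ i j, DifferentiableWithinAt ℝ (fun t => f t i j) s x) :
    DifferentiableWithinAt ℝ (fun t => (f t).det) s x := by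
  simp only [Matrix.det_apply']
  apply DifferentiableWithinAt.fun_sum
  intro σ _
  apply DifferentiableWithinAt.const_mul
  exact (HasFDerivWithinAt.finset_prod
    (fun i _ => (hent (σ i) i).hasFDerivWithinAt)).differentiableWithinAt

theorem st4_entries {f : ℝ → Mat} (hf : DifferentiableWithinAt ℝ f s x) (i j : Fin N) :
    DifferentiableWithinAt ℝ (fun t => f t i j) s x :=
  (st4_hasDeriv_iff.1 hf.hasDerivWithinAt i j).differentiableWithinAt

theorem st4_adjugate {f : ℝ → Mat} (hf : DifferentiableWithinAt ℝ f s x) :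
    DifferentiableWithinAt ℝ (fun t => (f t).adjugate) s x := by
  apply differentiableWithinAt_pi.2
  intro i
  apply differentiableWithinAt_pi.2
  intro j
  simp only [Matrix.adjugate_apply]
  apply st4_det_aux
  intro k l
  simp only [Matrix.updateRow_apply]
  by_cases hk : k = j
  · simp only [hk, if_true, if_pos]
    exact differentiableWithinAt_const _
  · simp only [hk, if_false]
    exact st4_entries hf k l

theorem st4_inv_diff {f : ℝ → Mat} (hf : DifferentiableWithinAt ℝ f s x)
    (hx : IsUnit (f x)) :
    DifferentiableWithinAt ℝ (fun t => (f t)⁻¹) s x := by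
  have hdet : IsUnit (f x).det := (Matrix.isUnit_iff_isUnit_det _).1 hx
  have h1 : DifferentiableWithinAt ℝ (fun t => ((f t).det)⁻¹ • (f t).adjugate) s x := by
    apply DifferentiableWithinAt.fun_smul
    · exact (st4_det_aux (st4_entries hf)).inv hdet.ne_zero
    · exact st4_adjugate hf
  exact h1.congr (fun t _ => by rw [Matrix.inv_def, Ring.inverse_eq_inv']) (by rw [Matrix.inv_def, Ring.inverse_eq_inv'])

theorem st4_inv_deriv {f : ℝ → Mat} {f' : Mat} (hs : UniqueDiffOn ℝ s) (hx : x ∈ s)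
    (hf : HasDerivWithinAt f f' s x) (hu : ∀ t ∈ s, IsUnit (f t)) :
    HasDerivWithinAt (fun t => (f t)⁻¹) (-((f x)⁻¹ * f' * (f x)⁻¹)) s x := by
  set iv := fun t => (f t)⁻¹ with hivdef
  have hdiff : DifferentiableWithinAt ℝ iv s x :=
    st4_inv_diff hf.differentiableWithinAt (hu x hx)
  have hiv : HasDerivWithinAt iv (derivWithin iv s x) s x := hdiff.hasDerivWithinAt
  have hprod : HasDerivWithinAt (fun t => f t * iv t)
      (f' * iv x + f x * derivWithin iv s x) s x := st4_mul hf hiv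
  have hone : ∀ t ∈ s, f t * iv t = 1 := fun t ht =>
    Matrix.mul_nonsing_inv _ ((Matrix.isUnit_iff_isUnit_det _).1 (hu t ht))
  have hconst : HasDerivWithinAt (fun t => f t * iv t) 0 s x :=
    (hasDerivWithinAt_const x s (1 : Mat)).congr hone (hone x hx)
  have huniq : f' * iv x + f x * derivWithin iv s x = 0 :=
    (hprod.derivWithin (hs x hx)).symm.trans (hconst.derivWithin (hs x hx))
  have hleft : iv x * f x = 1 :=
    Matrix.nonsing_inv_mul _ ((Matrix.isUnit_iff_isUnit_det _).1 (hu x hx))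
  have h5 : f x * derivWithin iv s x = -(f' * iv x) :=
    eq_neg_of_add_eq_zero_right huniq
  have hsolve : derivWithin iv s x = -((iv x) * f' * (iv x)) := by
    calc derivWithin iv s x = 1 * derivWithin iv s x := (one_mul _).symm
      _ = iv x * (f x * derivWithin iv s x) := by rw [← hleft, mul_assoc]
      _ = iv x * (-(f' * iv x)) := by rw [h5]
      _ = -(iv x * f' * iv x) := by rw [mul_neg, mul_assoc]
  exact hsolve ▸ hiv

theorem st4_constancy {E : Type*} [NormedAddCommGroup E] [NormedSpace ℝ E] {F : ℝ → E} {b : ℝ}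
    (hb : 0 < b) (hc : ContinuousOn F (Icc 0 b)) (hd : ∀ t ∈ Ioo 0 b, HasDerivAt F 0 t) :
    F b = F 0 := by
  have key : ∀ δ ∈ Ioc (0:ℝ) b, F b = F δ := by
    intro δ hδ
    have h1 : ContinuousOn F (Icc δ b) := hc.mono (Icc_subset_Icc hδ.1.le le_rfl)
    have h2 : ∀ y ∈ Ico δ b, HasDerivWithinAt F 0 (Ici y) y := fun y hy =>
      (hd y ⟨lt_of_lt_of_le hδ.1 hy.1, hy.2⟩).hasDerivWithinAt
    exact constant_of_has_deriv_right_zero h1 h2 b ⟨hδ.2, le_rfl⟩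
  have hne : (nhdsWithin (0:ℝ) (Ioc 0 b)).NeBot := by
    rw [← mem_closure_iff_nhdsWithin_neBot, closure_Ioc hb.ne]
    exact ⟨le_rfl, hb.le⟩
  have h3 : Filter.Tendsto F (nhdsWithin 0 (Ioc 0 b)) (nhds (F 0)) :=
    (hc.continuousWithinAt (left_mem_Icc.2 hb.le)).mono Ioc_subset_Icc_self
  have h4 : Filter.Tendsto F (nhdsWithin 0 (Ioc 0 b)) (nhds (F b)) := by
    apply Filter.Tendsto.congr' _ tendsto_const_nhds
    filter_upwards [self_mem_nhdsWithin] with δ hδ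
    exact key δ hδ
  exact tendsto_nhds_unique h4 h3


theorem st4_tendsto_entry {α : Type*} {l : Filter α} {f : α → Mat} {A : Mat}
    (h : Filter.Tendsto f l (nhds A)) (i j : Fin N) :
    Filter.Tendsto (fun t => f t i j) l (nhds (A i j)) :=
  tendsto_pi_nhds.1 (tendsto_pi_nhds.1 h i) j

theorem st4_tendsto_mul {α : Type*} {l : Filter α} {f h : α → Mat} {A B : Mat}
    (hf : Filter.Tendsto f l (nhds A)) (hh : Filter.Tendsto h l (nhds B)) :
    Filter.Tendsto (fun t => f t * h t) l (nhds (A * B)) := by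
  apply tendsto_pi_nhds.2
  intro i
  apply tendsto_pi_nhds.2
  intro j
  have hsum : Filter.Tendsto (fun t => ∑ k, f t i k * h t k j) l
      (nhds (∑ k, A i k * B k j)) :=
    tendsto_finset_sum _ fun k _ => (st4_tendsto_entry hf i k).mul (st4_tendsto_entry hh k j)
  have he : ∀ t, (f t * h t) i j = ∑ k, f t i k * h t k j := fun t => Matrix.mul_apply
  have he2 : (A * B) i j = ∑ k, A i k * B k j := Matrix.mul_apply
  rw [show (fun t => (f t * h t) i j) = (fun t => ∑ k, f t i k * h t k j) from funext he, he2]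
  exact hsum

theorem st4_cwa_mul {f h : ℝ → Mat} (hf : ContinuousWithinAt f s x)
    (hh : ContinuousWithinAt h s x) :
    ContinuousWithinAt (fun t => f t * h t) s x :=
  st4_tendsto_mul hf hh

theorem st4_Dalg {Ω : ℝ} {a b h : Mat} (hah : a * h = 1) (hha : h * a = 1) :
    (a - (Ω/4) • b) * h * (a - (Ω/4) • b)
      = a - (Ω/2) • b + (Ω^2/16) • (b * h * b) := by
  have e1 : a * h * a = a := by rw [hah, one_mul]
  have e2 : a * h * b = b := by rw [hah, one_mul]
  have e3 : b * h * a = b := by rw [mul_assoc, hha, mul_one]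
  simp only [sub_mul, mul_sub, smul_mul_assoc, mul_smul_comm, smul_sub, smul_smul]
  rw [e1, e2, e3]
  match_scalars <;> ring

theorem st4_Malg {Ω : ℝ} (hΩ : Ω ≠ 0) {a b c h d : Mat}
    (hah : a * h = 1) (hha : h * a = 1)
    (hdd : (a - (Ω/4) • b) * d = 1) (hdd2 : d * (a - (Ω/4) • b) = 1)
    (hc : c = (1/2:ℝ) • (b * h * b) + Ω⁻¹ • b) :
    Ω⁻¹ • (c * d + b * (-(d * (b - ((Ω/4) • c + ((1:ℝ)/4) • b)) * d)))
      + (-(Ω^2)⁻¹) • (b * d) = 0 := by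
  have e3 : b * h * a = b := by rw [mul_assoc, hha, mul_one]
  have hD' : b - ((Ω/4) • c + ((1:ℝ)/4) • b)
      = (1/2:ℝ) • (b * h * (a - (Ω/4) • b)) := by
    rw [hc]
    simp only [mul_sub, smul_sub, smul_add, smul_smul, mul_smul_comm, smul_mul_assoc]
    rw [e3]
    match_scalars <;> (field_simp; try ring; try norm_num)
  have e4 : d * (b * h * (a - (Ω/4) • b)) * d = d * (b * h) := by
    rw [← mul_assoc d (b*h) _, mul_assoc (d*(b*h)) _ d, hdd, mul_one]
  have hcomm : h * (b * d) = d * (b * h) := by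
    have e : (a - (Ω/4) • b) * (h * b) = b * h * (a - (Ω/4) • b) := by
      simp only [sub_mul, mul_sub, smul_mul_assoc, mul_smul_comm, ← mul_assoc]
      rw [hah, one_mul]
      rw [mul_assoc b h a, hha, mul_one]
    have e2 := congrArg (fun X => d * X * d) e
    rw [← mul_assoc, hdd2, one_mul] at e2
    rw [e4] at e2
    rw [← mul_assoc]
    exact e2
  rw [hD', mul_smul_comm, smul_mul_assoc, e4, hc]
  simp only [add_mul, smul_mul_assoc, mul_smul_comm, mul_neg, smul_neg, mul_assoc, smul_add,
    smul_smul, neg_smul]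
  rw [hcomm]
  match_scalars <;> field_simp <;> ring

theorem st4_final {Ω : ℝ} (hΩ : Ω ≠ 0) {a b h d γm γi G : Mat}
    (hah : a * h = 1) (hha : h * a = 1)
    (hγ : γm * γi = 1) (hγi : γi * γm = 1)
    (hdd : (a - (Ω/4) • b) * d = 1) (hdd2 : d * (a - (Ω/4) • b) = 1)
    (hQ : (a - (Ω/4) • b) * h * (a - (Ω/4) • b) = γm)
    (hM : Ω⁻¹ • (b * d) = G * γi) :
    a = γm + (Ω^2/2) • G + (Ω^4/16) • (G * γi * G) := by
  set Dm : Mat := a - (Ω/4) • b with hDm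
  have hb : b = Ω • (G * γi * Dm) := by
    have h1 := congrArg (fun X => Ω • (X * Dm)) hM
    rw [smul_mul_assoc, smul_smul, mul_inv_cancel₀ hΩ, one_smul, mul_assoc, hdd2, mul_one] at h1
    exact h1
  have RDd : ∀ X : Mat, Dm * (d * X) = X := fun X => by rw [← mul_assoc, hdd, one_mul]
  have Rha : ∀ X : Mat, h * (a * X) = X := fun X => by rw [← mul_assoc, hha, one_mul]
  have hγid : γi = d * a * d := by
    have hone : γm * (d * a * d) = 1 := by
      rw [← hQ]
      simp only [mul_assoc, RDd, Rha, hdd]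
    calc γi = γi * (γm * (d * a * d)) := by rw [hone, mul_one]
      _ = (γi * γm) * (d * a * d) := by rw [← mul_assoc]
      _ = d * a * d := by rw [hγi, one_mul]
  have ha_eq : Dm * γi * Dm = a := by
    rw [hγid]
    simp only [mul_assoc, hdd2, mul_one, RDd]
  have h2 : Dm * γi * Dm - (Ω^2/4) • (G * γi * Dm) = Dm := by
    rw [ha_eq]
    nth_rewrite 2 [hDm]
    rw [hb, smul_smul]
    have : Ω / 4 * Ω = Ω^2/4 := by ring
    rw [this]
  have h3 : Dm * γi - (Ω^2/4) • (G * γi) = 1 := by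
    have h4 := congrArg (fun X => X * d) h2
    simp only [sub_mul, smul_mul_assoc, mul_assoc, hdd, mul_one] at h4
    exact h4
  have h5 : Dm = γm + (Ω^2/4) • G := by
    have h6 := congrArg (fun X => X * γm) h3
    simp only [sub_mul, smul_mul_assoc, one_mul, mul_assoc, hγi, mul_one] at h6
    rw [← h6]
    abel
  have Rγ : ∀ X : Mat, γm * (γi * X) = X := fun X => by rw [← mul_assoc, hγ, one_mul]
  rw [← ha_eq, h5]
  simp only [add_mul, mul_add, smul_mul_assoc, mul_smul_comm, smul_smul, smul_add, mul_assoc,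
    Rγ, hγi, mul_one]
  match_scalars <;> ring

end St4Aux

theorem statement4
    (n : ℕ) (hn : 1 ≤ n) (ε : ℝ) (hε : 0 < ε)
    (g : ℝ → Matrix (Fin n) (Fin n) ℝ)
    (hg : ContDiffOn ℝ 4 g (Set.Ico 0 ε))
    (hsym : ∀ Ω ∈ Set.Ico (0:ℝ) ε, (g Ω).IsSymm)
    (hinv : ∀ Ω ∈ Set.Ico (0:ℝ) ε, IsUnit (g Ω))
    (hODE : ∀ Ω ∈ Set.Ioo (0:ℝ) ε,
      iteratedDerivWithin 2 g (Set.Ico 0 ε) Ω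
        = (1/2 : ℝ) • (derivWithin g (Set.Ico 0 ε) Ω * (g Ω)⁻¹
            * derivWithin g (Set.Ico 0 ε) Ω)
          + Ω⁻¹ • derivWithin g (Set.Ico 0 ε) Ω) :
    derivWithin g (Set.Ico 0 ε) 0 = 0 ∧
    iteratedDerivWithin 3 g (Set.Ico 0 ε) 0 = 0 ∧
    ∀ Ω ∈ Set.Ico (0:ℝ) ε,
      g Ω = g 0 + (Ω^2/2) • iteratedDerivWithin 2 g (Set.Ico 0 ε) 0
        + (Ω^4/16) • (iteratedDerivWithin 2 g (Set.Ico 0 ε) 0 * (g 0)⁻¹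
            * iteratedDerivWithin 2 g (Set.Ico 0 ε) 0) := by
  set s : Set ℝ := Set.Ico 0 ε with hsdef
  have hsu : UniqueDiffOn ℝ s := uniqueDiffOn_Ico 0 ε
  have h0s : (0:ℝ) ∈ s := ⟨le_rfl, hε⟩
  set g1 : ℝ → Matrix (Fin n) (Fin n) ℝ := derivWithin g s with hg1def
  set g2 : ℝ → Matrix (Fin n) (Fin n) ℝ := derivWithin g1 s with hg2def
  have hIoo : Set.Ioo (0:ℝ) ε ⊆ s := Set.Ioo_subset_Ico_self
  have hgd : DifferentiableOn ℝ g s := hg.differentiableOn (by norm_num)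
  have hg1cd : ContDiffOn ℝ 3 g1 s := hg.derivWithin hsu (by norm_num)
  have hg1c : ContinuousOn g1 s := hg1cd.continuousOn
  have hg1d : DifferentiableOn ℝ g1 s := hg1cd.differentiableOn (by norm_num)
  have hg2cd : ContDiffOn ℝ 2 g2 s := hg1cd.derivWithin hsu (by norm_num)
  have hg2c : ContinuousOn g2 s := hg2cd.continuousOn
  have hDg : ∀ x ∈ s, HasDerivWithinAt g (g1 x) s x := fun x hx => (hgd x hx).hasDerivWithinAt
  have hDg1 : ∀ x ∈ s, HasDerivWithinAt g1 (g2 x) s x := fun x hx => (hg1d x hx).hasDerivWithinAt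
  have hdet : ∀ x ∈ s, IsUnit (g x).det := fun x hx =>
    (Matrix.isUnit_iff_isUnit_det _).1 (hinv x hx)
  have hit2 : ∀ x ∈ s, iteratedDerivWithin 2 g s x = g2 x := by
    intro x hx
    rw [show (2:ℕ) = 1 + 1 from rfl, iteratedDerivWithin_succ]
    rw [hg2def]
    exact derivWithin_congr (fun y hy => congrFun iteratedDerivWithin_one y)
      (congrFun iteratedDerivWithin_one x)
  have hODE2 : ∀ Ω ∈ Set.Ioo (0:ℝ) ε,
      g2 Ω = (1/2:ℝ) • (g1 Ω * (g Ω)⁻¹ * g1 Ω) + Ω⁻¹ • g1 Ω := by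
    intro Ω hΩ
    have h := hODE Ω hΩ
    rw [hit2 Ω (hIoo hΩ)] at h
    exact h
  have hmem_nhds : ∀ Ω ∈ Set.Ioo (0:ℝ) ε, s ∈ nhds Ω := fun Ω hΩ =>
    mem_nhds_iff.2 ⟨Set.Ioo 0 ε, hIoo, isOpen_Ioo, hΩ⟩
  have hinvd : ∀ x ∈ s, HasDerivWithinAt (fun t => (g t)⁻¹)
      (-((g x)⁻¹ * g1 x * (g x)⁻¹)) s x := fun x hx =>
    st4_inv_deriv hsu hx (hDg x hx) hinv
  -- ## Step 1 : the conserved quantity Q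
  set Q : ℝ → Matrix (Fin n) (Fin n) ℝ :=
    fun Ω => g Ω - (Ω/2) • g1 Ω + (Ω^2/16) • (g1 Ω * (g Ω)⁻¹ * g1 Ω) with hQdef
  have hQc : ContinuousOn Q s := by
    intro x hx
    exact (((hDg x hx).sub ((((hasDerivWithinAt_id x s).div_const 2).smul (hDg1 x hx)))).add
      ((((hasDerivWithinAt_pow 2 x (s := s)).div_const 16).smul
        (st4_mul (st4_mul (hDg1 x hx) (hinvd x hx)) (hDg1 x hx))))).continuousWithinAt
  have hQd : ∀ Ω ∈ Set.Ioo (0:ℝ) ε, HasDerivAt Q 0 Ω := by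
    intro Ω hΩ
    have hΩs : Ω ∈ s := hIoo hΩ
    have hΩ0 : Ω ≠ 0 := ne_of_gt hΩ.1
    have hc2 : HasDerivWithinAt (fun t : ℝ => t/2) ((1:ℝ)/2) s Ω :=
      (hasDerivWithinAt_id Ω s).div_const 2
    have hc16 : HasDerivWithinAt (fun t : ℝ => t^2/16) (Ω/8) s Ω := by
      have h := (hasDerivWithinAt_pow 2 Ω (s := s)).div_const 16
      refine h.congr_deriv ?_
      push_cast
      ring
    have t1 : HasDerivWithinAt (fun t : ℝ => (t/2) • g1 t)
        ((Ω/2) • g2 Ω + ((1:ℝ)/2) • g1 Ω) s Ω := hc2.smul (hDg1 Ω hΩs)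
    have t3 : HasDerivWithinAt
        (fun t : ℝ => (t^2/16) • (g1 t * (g t)⁻¹ * g1 t))
        ((Ω^2/16) • ((g2 Ω * (g Ω)⁻¹ + g1 Ω * (-((g Ω)⁻¹ * g1 Ω * (g Ω)⁻¹))) * g1 Ω
            + (g1 Ω * (g Ω)⁻¹) * g2 Ω)
          + (Ω/8) • (g1 Ω * (g Ω)⁻¹ * g1 Ω)) s Ω :=
      hc16.smul (st4_mul (st4_mul (hDg1 Ω hΩs) (hinvd Ω hΩs)) (hDg1 Ω hΩs))
    have T : HasDerivWithinAt Q
        ((g1 Ω - ((Ω/2) • g2 Ω + ((1:ℝ)/2) • g1 Ω)) +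
          ((Ω^2/16) • ((g2 Ω * (g Ω)⁻¹ + g1 Ω * (-((g Ω)⁻¹ * g1 Ω * (g Ω)⁻¹))) * g1 Ω
              + (g1 Ω * (g Ω)⁻¹) * g2 Ω)
            + (Ω/8) • (g1 Ω * (g Ω)⁻¹ * g1 Ω))) s Ω :=
      ((hDg Ω hΩs).sub t1).add t3
    have hval : ((g1 Ω - ((Ω/2) • g2 Ω + ((1:ℝ)/2) • g1 Ω)) +
          ((Ω^2/16) • ((g2 Ω * (g Ω)⁻¹ + g1 Ω * (-((g Ω)⁻¹ * g1 Ω * (g Ω)⁻¹))) * g1 Ω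
              + (g1 Ω * (g Ω)⁻¹) * g2 Ω)
            + (Ω/8) • (g1 Ω * (g Ω)⁻¹ * g1 Ω))) = 0 := by
      rw [hODE2 Ω hΩ]
      set b := g1 Ω
      set h := (g Ω)⁻¹
      simp only [smul_add, smul_smul, mul_add, add_mul, mul_neg, neg_mul, smul_neg,
        smul_sub, sub_mul, mul_sub, smul_mul_assoc, mul_smul_comm, mul_assoc]
      match_scalars <;> field_simp <;> ring
    rw [hval] at T
    exact T.hasDerivAt (hmem_nhds Ω hΩ)
  have hQγ : ∀ Ω ∈ s, Q Ω = g 0 := by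
    intro Ω hΩ
    rcases eq_or_lt_of_le hΩ.1 with h|h
    · rw [← h]; rw [hQdef]; norm_num
    · have : Q Ω = Q 0 := st4_constancy h
        (hQc.mono (fun y hy => ⟨hy.1, lt_of_le_of_lt hy.2 hΩ.2⟩))
        (fun t ht => hQd t ⟨ht.1, lt_trans ht.2 hΩ.2⟩)
      rw [this, hQdef]; norm_num
  -- ## Step 2 : D = g - (Ω/4) ġ and its invertibility
  set D : ℝ → Matrix (Fin n) (Fin n) ℝ := fun t => g t - (t/4) • g1 t with hDdef
  have hah : ∀ Ω ∈ s, g Ω * (g Ω)⁻¹ = 1 := fun Ω hΩ => Matrix.mul_nonsing_inv _ (hdet Ω hΩ)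
  have hha : ∀ Ω ∈ s, (g Ω)⁻¹ * g Ω = 1 := fun Ω hΩ => Matrix.nonsing_inv_mul _ (hdet Ω hΩ)
  have hDQ : ∀ Ω ∈ s, D Ω * (g Ω)⁻¹ * D Ω = g 0 := fun Ω hΩ =>
    (st4_Dalg (hah Ω hΩ) (hha Ω hΩ)).trans (hQγ Ω hΩ)
  have hDdet : ∀ Ω ∈ s, IsUnit (D Ω).det := by
    intro Ω hΩ
    have hd := congrArg Matrix.det (hDQ Ω hΩ)
    rw [Matrix.det_mul, Matrix.det_mul] at hd
    have h5 : IsUnit ((D Ω).det * (g Ω)⁻¹.det * (D Ω).det) := by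
      rw [hd]; exact hdet 0 h0s
    exact isUnit_of_mul_isUnit_left (isUnit_of_mul_isUnit_left h5)
  have hDu : ∀ Ω ∈ s, IsUnit (D Ω) := fun Ω hΩ =>
    (Matrix.isUnit_iff_isUnit_det _).2 (hDdet Ω hΩ)
  -- ## Step 3 : ġ(0) = 0
  have hne : (nhdsWithin (0:ℝ) (Set.Ioo 0 ε)).NeBot := by
    rw [← mem_closure_iff_nhdsWithin_neBot, closure_Ioo hε.ne]
    exact ⟨le_rfl, hε.le⟩
  have hP3c : ∀ x ∈ s, ContinuousWithinAt (fun Ω => g1 Ω * (g Ω)⁻¹ * g1 Ω) s x :=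
    fun x hx => st4_cwa_mul (st4_cwa_mul (hg1c x hx) ((hinvd x hx).continuousWithinAt))
      (hg1c x hx)
  have hg10 : g1 0 = 0 := by
    have h1 : Filter.Tendsto (fun Ω : ℝ => Ω) (nhdsWithin 0 (Set.Ioo 0 ε)) (nhds 0) :=
      (continuous_id.tendsto 0).mono_left nhdsWithin_le_nhds
    have h2 : Filter.Tendsto (fun Ω => g2 Ω - (1/2:ℝ) • (g1 Ω * (g Ω)⁻¹ * g1 Ω))
        (nhdsWithin 0 (Set.Ioo 0 ε))
        (nhds (g2 0 - (1/2:ℝ) • (g1 0 * (g 0)⁻¹ * g1 0))) :=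
      (((hg2c 0 h0s).fun_sub ((continuousWithinAt_const).fun_smul (hP3c 0 h0s)))).mono hIoo
    have hA : Filter.Tendsto (fun Ω => Ω • (g2 Ω - (1/2:ℝ) • (g1 Ω * (g Ω)⁻¹ * g1 Ω)))
        (nhdsWithin 0 (Set.Ioo 0 ε)) (nhds 0) := by
      have := h1.smul h2
      rwa [zero_smul] at this
    have hAeq : ∀ᶠ Ω in nhdsWithin 0 (Set.Ioo 0 ε),
        Ω • (g2 Ω - (1/2:ℝ) • (g1 Ω * (g Ω)⁻¹ * g1 Ω)) = g1 Ω := by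
      filter_upwards [self_mem_nhdsWithin] with Ω hΩ
      rw [hODE2 Ω hΩ, add_sub_cancel_left, smul_smul,
        mul_inv_cancel₀ (ne_of_gt hΩ.1), one_smul]
    have hg1tend : Filter.Tendsto g1 (nhdsWithin 0 (Set.Ioo 0 ε)) (nhds (g1 0)) :=
      (hg1c 0 h0s).mono hIoo
    exact (tendsto_nhds_unique hg1tend (hA.congr' hAeq)).symm ▸ rfl
  -- ## Step 4 : the conserved quantity M
  have hDd : ∀ x ∈ s, HasDerivWithinAt D
      (g1 x - ((x/4) • g2 x + ((1:ℝ)/4) • g1 x)) s x := fun x hx =>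
    (hDg x hx).sub (((hasDerivWithinAt_id x s).div_const 4).smul (hDg1 x hx))
  have hDinvd : ∀ x ∈ s, HasDerivWithinAt (fun t => (D t)⁻¹)
      (-((D x)⁻¹ * (g1 x - ((x/4) • g2 x + ((1:ℝ)/4) • g1 x)) * (D x)⁻¹)) s x :=
    fun x hx => st4_inv_deriv hsu hx (hDd x hx) hDu
  set M : ℝ → Matrix (Fin n) (Fin n) ℝ :=
    fun Ω => if Ω = 0 then g2 0 * (g 0)⁻¹ else Ω⁻¹ • (g1 Ω * (D Ω)⁻¹) with hMdef
  have hD0 : D 0 = g 0 := by rw [hDdef]; simp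
  have hMc : ContinuousOn M s := by
    intro x hx
    rcases eq_or_ne x 0 with rfl | hx0
    · rw [← continuousWithinAt_diff_self]
      have hset : s \ {(0:ℝ)} = Set.Ioo 0 ε := Set.Ico_diff_left
      rw [hset]
      have hslope : Filter.Tendsto (slope g1 0) (nhdsWithin 0 (s \ {0})) (nhds (g2 0)) :=
        hasDerivWithinAt_iff_tendsto_slope.1 (hDg1 0 h0s)
      rw [hset] at hslope
      have hiDt : Filter.Tendsto (fun t => (D t)⁻¹) (nhdsWithin 0 (Set.Ioo 0 ε))
          (nhds ((D 0)⁻¹)) := ((hDinvd 0 h0s).continuousWithinAt).mono hIoo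
      have hmul := st4_tendsto_mul hslope hiDt
      have hMvals : ∀ᶠ t in nhdsWithin 0 (Set.Ioo 0 ε),
          slope g1 0 t * (D t)⁻¹ = M t := by
        filter_upwards [self_mem_nhdsWithin] with t ht
        have ht0 : t ≠ 0 := ne_of_gt ht.1
        rw [hMdef]
        simp only [if_neg ht0]
        rw [slope_def_module, hg10, sub_zero, sub_zero, smul_mul_assoc]
      have htend : Filter.Tendsto M (nhdsWithin 0 (Set.Ioo 0 ε))
          (nhds (g2 0 * (D 0)⁻¹)) := hmul.congr' hMvals
      have hM0 : M 0 = g2 0 * (D 0)⁻¹ := by rw [hMdef]; simp [hD0]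
      show Filter.Tendsto M (nhdsWithin 0 (Set.Ioo 0 ε)) (nhds (M 0))
      rw [hM0]
      exact htend
    · have hform : ContinuousWithinAt (fun t => t⁻¹ • (g1 t * (D t)⁻¹)) s x :=
        ((continuousWithinAt_id).inv₀ hx0).smul
          (st4_cwa_mul (hg1c x hx) ((hDinvd x hx).continuousWithinAt))
      apply hform.congr_of_eventuallyEq
      · have hmem : {t : ℝ | t ≠ 0} ∈ nhdsWithin x s :=
          nhdsWithin_le_nhds (isOpen_ne.mem_nhds hx0)
        filter_upwards [hmem] with t ht
        rw [hMdef]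
        simp only [if_neg ht]
      · rw [hMdef]; simp only [if_neg hx0]
  have hMd : ∀ Ω ∈ Set.Ioo (0:ℝ) ε, HasDerivAt M 0 Ω := by
    intro Ω hΩ
    have hΩs : Ω ∈ s := hIoo hΩ
    have hΩ0 : Ω ≠ 0 := ne_of_gt hΩ.1
    have hmem := hmem_nhds Ω hΩ
    have hbd : HasDerivAt g1 (g2 Ω) Ω := (hDg1 Ω hΩs).hasDerivAt hmem
    have hdd : HasDerivAt (fun t => (D t)⁻¹)
        (-((D Ω)⁻¹ * (g1 Ω - ((Ω/4) • g2 Ω + ((1:ℝ)/4) • g1 Ω)) * (D Ω)⁻¹)) Ω :=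
      (hDinvd Ω hΩs).hasDerivAt hmem
    have hmul : HasDerivAt (fun t => g1 t * (D t)⁻¹)
        (g2 Ω * (D Ω)⁻¹ + g1 Ω *
          (-((D Ω)⁻¹ * (g1 Ω - ((Ω/4) • g2 Ω + ((1:ℝ)/4) • g1 Ω)) * (D Ω)⁻¹))) Ω :=
      hasDerivWithinAt_univ.1 (st4_mul hbd.hasDerivWithinAt hdd.hasDerivWithinAt)
    have hsc : HasDerivAt (fun t : ℝ => t⁻¹) (-(Ω^2)⁻¹) Ω := hasDerivAt_inv hΩ0
    have hF : HasDerivAt (fun t : ℝ => t⁻¹ • (g1 t * (D t)⁻¹))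
        (Ω⁻¹ • (g2 Ω * (D Ω)⁻¹ + g1 Ω *
            (-((D Ω)⁻¹ * (g1 Ω - ((Ω/4) • g2 Ω + ((1:ℝ)/4) • g1 Ω)) * (D Ω)⁻¹)))
          + (-(Ω^2)⁻¹) • (g1 Ω * (D Ω)⁻¹)) Ω := hsc.smul hmul
    have hDd1 : (g Ω - (Ω/4) • g1 Ω) * (D Ω)⁻¹ = 1 :=
      Matrix.mul_nonsing_inv _ (hDdet Ω hΩs)
    have hDd2 : (D Ω)⁻¹ * (g Ω - (Ω/4) • g1 Ω) = 1 :=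
      Matrix.nonsing_inv_mul _ (hDdet Ω hΩs)
    have hval := st4_Malg hΩ0 (hah Ω hΩs) (hha Ω hΩs) hDd1 hDd2 (hODE2 Ω hΩ)
    rw [hval] at hF
    have hev : M =ᶠ[nhds Ω] (fun t : ℝ => t⁻¹ • (g1 t * (D t)⁻¹)) := by
      filter_upwards [isOpen_ne.mem_nhds hΩ0] with t ht
      rw [hMdef]
      simp only [if_neg ht]
    exact hF.congr_of_eventuallyEq hev
  have hMconst : ∀ Ω ∈ s, M Ω = M 0 := by
    intro Ω hΩ
    rcases eq_or_lt_of_le hΩ.1 with h|h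
    · rw [← h]
    · exact st4_constancy h
        (hMc.mono (fun y hy => ⟨hy.1, lt_of_le_of_lt hy.2 hΩ.2⟩))
        (fun t ht => hMd t ⟨ht.1, lt_trans ht.2 hΩ.2⟩)
  -- ## Step 5 : conclusion
  have hG : iteratedDerivWithin 2 g s 0 = g2 0 := hit2 0 h0s
  have hfinal : ∀ Ω ∈ s, g Ω = g 0 + (Ω^2/2) • g2 0
      + (Ω^4/16) • (g2 0 * (g 0)⁻¹ * g2 0) := by
    intro Ω hΩ
    rcases eq_or_ne Ω 0 with rfl | hΩ0
    · simp
    · have hΩI : Ω ∈ Set.Ioo 0 ε := ⟨lt_of_le_of_ne hΩ.1 (Ne.symm hΩ0), hΩ.2⟩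
      have hMΩ : Ω⁻¹ • (g1 Ω * (D Ω)⁻¹) = g2 0 * (g 0)⁻¹ := by
        have h6 := hMconst Ω hΩ
        rw [hMdef] at h6
        simp only [if_neg hΩ0, if_pos rfl] at h6
        exact h6
      have hDd1 : (g Ω - (Ω/4) • g1 Ω) * (D Ω)⁻¹ = 1 :=
        Matrix.mul_nonsing_inv _ (hDdet Ω hΩ)
      have hDd2 : (D Ω)⁻¹ * (g Ω - (Ω/4) • g1 Ω) = 1 :=
        Matrix.nonsing_inv_mul _ (hDdet Ω hΩ)
      exact st4_final hΩ0 (hah Ω hΩ) (hha Ω hΩ)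
        (Matrix.mul_nonsing_inv _ (hdet 0 h0s)) (Matrix.nonsing_inv_mul _ (hdet 0 h0s))
        hDd1 hDd2 (hDQ Ω hΩ) hMΩ
  -- outputs
  refine ⟨hg10, ?_, ?_⟩
  · -- third derivative vanishes at 0
    set C : Matrix (Fin n) (Fin n) ℝ := g2 0 * (g 0)⁻¹ * g2 0 with hCdef
    have hPd : ∀ x ∈ s, HasDerivWithinAt
        (fun t : ℝ => g 0 + (t^2/2) • g2 0 + (t^4/16) • C)
        (x • g2 0 + (x^3/4) • C) s x := by
      intro x hx
      have h1 : HasDerivWithinAt (fun t : ℝ => t^2/2) x s x := by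
        have := (hasDerivWithinAt_pow 2 x (s := s)).div_const 2
        refine this.congr_deriv ?_
        all_goals (push_cast; ring)
      have h2 : HasDerivWithinAt (fun t : ℝ => t^4/16) (x^3/4) s x := by
        have := (hasDerivWithinAt_pow 4 x (s := s)).div_const 16
        refine this.congr_deriv ?_
        all_goals (push_cast; ring)
      have h3 := ((hasDerivWithinAt_const x s (g 0)).add (h1.smul_const (g2 0))).add
        (h2.smul_const C)
      rwa [zero_add] at h3
    have hg1P : ∀ x ∈ s, g1 x = x • g2 0 + (x^3/4) • C := by
      intro x hx
      rw [hg1def]; refine (derivWithin_congr (fun y hy => hfinal y hy) (hfinal x hx)).trans ?_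
      exact (hPd x hx).derivWithin (hsu x hx)
    have hP1d : ∀ x ∈ s, HasDerivWithinAt
        (fun t : ℝ => t • g2 0 + (t^3/4) • C)
        (g2 0 + (3*x^2/4) • C) s x := by
      intro x hx
      have t1 : HasDerivWithinAt (fun t : ℝ => t • g2 0) ((1:ℝ) • g2 0) s x :=
        (hasDerivWithinAt_id x s).smul_const (g2 0)
      have h2 : HasDerivWithinAt (fun t : ℝ => t^3/4) (3*x^2/4) s x := by
        have := (hasDerivWithinAt_pow 3 x (s := s)).div_const 4
        refine this.congr_deriv ?_
        all_goals (push_cast; ring)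
      have := t1.add (h2.smul_const C)
      rwa [one_smul] at this
    have hg2P : ∀ x ∈ s, g2 x = g2 0 + (3*x^2/4) • C := by
      intro x hx
      rw [hg2def]; refine (derivWithin_congr (fun y hy => hg1P y hy) (hg1P x hx)).trans ?_
      exact (hP1d x hx).derivWithin (hsu x hx)
    have e3 : iteratedDerivWithin 3 g s 0 = derivWithin g2 s 0 := by
      rw [show (3:ℕ) = 2 + 1 from rfl, iteratedDerivWithin_succ]
      exact derivWithin_congr (fun y hy => hit2 y hy) (hit2 0 h0s)
    rw [e3]; refine (derivWithin_congr (fun y hy => hg2P y hy) (hg2P 0 h0s)).trans ?_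
    have h2 : HasDerivWithinAt (fun t : ℝ => 3*t^2/4) 0 s 0 := by
      have := ((hasDerivWithinAt_pow 2 (0:ℝ) (s := s)).const_mul 3).div_const 4
      refine this.congr_deriv ?_
      norm_num
    have hP2d : HasDerivWithinAt (fun t : ℝ => g2 0 + (3*t^2/4) • C) 0 s 0 := by
      have := (hasDerivWithinAt_const (0:ℝ) s (g2 0)).add (h2.smul_const C)
      rwa [zero_smul, add_zero] at this
    exact hP2d.derivWithin (hsu 0 h0s)
  · intro Ω hΩ
    rw [hG]
    exact hfinal Ω hΩ
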